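/- (Monotonicity of one iteration of Algorithm 1.) Suppose P_{l,k} > 0, β_{l,k}^l > 0, and 0 < ρ̂_{l,k} ≤ √P_{l,k}, 0 < ρ_{l,k} ≤ √P_{l,k} for all l and k ∈ A_l. Define, in order: u_{l,k} = u^opt_{l,k}(ρ̂, ρ); w_{l,k} = 1 + SINR_{l,k}(ρ̂, ρ); ρ̂⁺_{l,k} = min( √(M K) ρ_{l,k} u_{l,k} w_{l,k} β_{l,k}^l / η̂_{l,k}(u,w,ρ), √P_{l,k} ); and ρ⁺_{l,k} = min( √(M K) ρ̂⁺_{l,k} u_{l,k} w_{l,k} β_{l,k}^l / η_{l,k}(u,w,ρ̂⁺), √P_{l,k} ). Then all quantities are well defined (u_{l,k} > 0, w_{l,k} > 0, η̂_{l,k}(u,w,ρ) > 0, η_{l,k}(u,w,ρ̂⁺) > 0) and the sum spectral efficiency does not decrease: Σ_{l=1}^L Σ_{k∈A_l} ln(1 + SINR_{l,k}(ρ̂⁺, ρ⁺)) ≥ Σ_{l=1}^L Σ_{k∈A_l} ln(1 + SINR_{l,k}(ρ̂, ρ)). -/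

import Mathlib

open Finset Filter

noncomputable section

/-- `Pset A k` : the set of cells in which user index `k` is active,
i.e. `P_k = {i : k ∈ A_i}`. -/
def Pset {L K : ℕ} (A : Fin L → Finset (Fin K)) (k : Fin K) : Finset (Fin L) :=
  Finset.univ.filter fun i => k ∈ A i

/-- The SINR denominator `D_{l,k}` for pilot powers `phat` and data powers `p`. -/
def Dterm {L K : ℕ} (M : ℕ) (σ2 : ℝ) (A : Fin L → Finset (Fin K))
    (β : Fin L → Fin K → Fin L → ℝ) (phat p : Fin L → Fin K → ℝ)
    (l : Fin L) (k : Fin K) : ℝ :=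
  (M : ℝ) * (K : ℝ) * ∑ i ∈ (Pset A k).erase l, p i k * phat i k * β i k l ^ 2 +
    ((K : ℝ) * ∑ i ∈ Pset A k, phat i k * β i k l + σ2) *
      ((∑ i, ∑ t ∈ A i, p i t * β i t l) + σ2)

/-- `SINR_{l,k}` for pilot powers `phat` and data powers `p`. -/
def SINR {L K : ℕ} (M : ℕ) (σ2 : ℝ) (A : Fin L → Finset (Fin K))
    (β : Fin L → Fin K → Fin L → ℝ) (phat p : Fin L → Fin K → ℝ)
    (l : Fin L) (k : Fin K) : ℝ :=
  (M : ℝ) * (K : ℝ) * p l k * phat l k * β l k l ^ 2 / Dterm M σ2 A β phat p l k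

/-- `SINR_{l,k}(ρ̂, ρ)` : the SINR evaluated at squared square-root powers. -/
def SINRsq {L K : ℕ} (M : ℕ) (σ2 : ℝ) (A : Fin L → Finset (Fin K))
    (β : Fin L → Fin K → Fin L → ℝ) (rhat rho : Fin L → Fin K → ℝ)
    (l : Fin L) (k : Fin K) : ℝ :=
  SINR M σ2 A β (fun i t => rhat i t ^ 2) (fun i t => rho i t ^ 2) l k

/-- The mean square error `e_{l,k}(u, ρ̂, ρ)`. -/
def eMSE {L K : ℕ} (M : ℕ) (σ2 : ℝ) (A : Fin L → Finset (Fin K))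
    (β : Fin L → Fin K → Fin L → ℝ) (u : ℝ) (rhat rho : Fin L → Fin K → ℝ)
    (l : Fin L) (k : Fin K) : ℝ :=
  (M : ℝ) * (K : ℝ) * u ^ 2 * ∑ i ∈ Pset A k, rho i k ^ 2 * rhat i k ^ 2 * β i k l ^ 2
    - 2 * Real.sqrt ((M : ℝ) * (K : ℝ)) * rho l k * rhat l k * u * β l k l
    + u ^ 2 * ((K : ℝ) * ∑ i ∈ Pset A k, rhat i k ^ 2 * β i k l + σ2) *
        ((∑ i, ∑ t ∈ A i, rho i t ^ 2 * β i t l) + σ2)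
    + 1

/-- The leading (quadratic in `u`) coefficient `A_{l,k}(ρ̂, ρ)` of `e_{l,k}`. -/
def Acoef {L K : ℕ} (M : ℕ) (σ2 : ℝ) (A : Fin L → Finset (Fin K))
    (β : Fin L → Fin K → Fin L → ℝ) (rhat rho : Fin L → Fin K → ℝ)
    (l : Fin L) (k : Fin K) : ℝ :=
  (M : ℝ) * (K : ℝ) * ∑ i ∈ Pset A k, rho i k ^ 2 * rhat i k ^ 2 * β i k l ^ 2 +
    ((K : ℝ) * ∑ i ∈ Pset A k, rhat i k ^ 2 * β i k l + σ2) *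
      ((∑ i, ∑ t ∈ A i, rho i t ^ 2 * β i t l) + σ2)

/-- The optimal beamforming coefficient `u^opt_{l,k}(ρ̂, ρ)`. -/
def uopt {L K : ℕ} (M : ℕ) (σ2 : ℝ) (A : Fin L → Finset (Fin K))
    (β : Fin L → Fin K → Fin L → ℝ) (rhat rho : Fin L → Fin K → ℝ)
    (l : Fin L) (k : Fin K) : ℝ :=
  Real.sqrt ((M : ℝ) * (K : ℝ)) * rho l k * rhat l k * β l k l /
    Acoef M σ2 A β rhat rho l k

/-- The weighted-MMSE objective `F(u, w, ρ̂, ρ)`. -/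
def Fobj {L K : ℕ} (M : ℕ) (σ2 : ℝ) (A : Fin L → Finset (Fin K))
    (β : Fin L → Fin K → Fin L → ℝ) (u w rhat rho : Fin L → Fin K → ℝ) : ℝ :=
  ∑ l, ∑ k ∈ A l, (w l k * eMSE M σ2 A β (u l k) rhat rho l k - Real.log (w l k))

/-- The pilot-power quadratic coefficient `η̂_{l,k}(u, w, ρ)`. -/
def etaHat {L K : ℕ} (M : ℕ) (σ2 : ℝ) (A : Fin L → Finset (Fin K))
    (β : Fin L → Fin K → Fin L → ℝ) (u w rho : Fin L → Fin K → ℝ)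
    (l : Fin L) (k : Fin K) : ℝ :=
  rho l k ^ 2 * (M : ℝ) * (K : ℝ) * ∑ i ∈ Pset A k, w i k * u i k ^ 2 * β l k i ^ 2 +
    (K : ℝ) * ∑ j ∈ Pset A k, w j k * u j k ^ 2 * β l k j *
      ((∑ i, ∑ t ∈ A i, rho i t ^ 2 * β i t j) + σ2)

/-- The data-power quadratic coefficient `η_{l,k}(u, w, ρ̂)`. -/
def etaData {L K : ℕ} (M : ℕ) (σ2 : ℝ) (A : Fin L → Finset (Fin K))
    (β : Fin L → Fin K → Fin L → ℝ) (u w rhat : Fin L → Fin K → ℝ)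
    (l : Fin L) (k : Fin K) : ℝ :=
  rhat l k ^ 2 * (M : ℝ) * (K : ℝ) * ∑ i ∈ Pset A k, w i k * u i k ^ 2 * β l k i ^ 2 +
    ∑ i, ∑ t ∈ A i, w i t * u i t ^ 2 * β l k i *
      ((K : ℝ) * ∑ j ∈ Pset A t, rhat j t ^ 2 * β j t i + σ2)
section Aux

variable {L K : ℕ}

lemma mem_Pset {A : Fin L → Finset (Fin K)} {i : Fin L} {k : Fin K} :
    i ∈ Pset A k ↔ k ∈ A i := by simp [Pset]

lemma sum_swap_A (A : Fin L → Finset (Fin K)) (f : Fin L → Fin K → ℝ) :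
    ∑ l, ∑ k ∈ A l, f l k = ∑ k, ∑ l ∈ Pset A k, f l k := by
  calc ∑ l, ∑ k ∈ A l, f l k
      = ∑ l, ∑ k, if k ∈ A l then f l k else 0 :=
        Finset.sum_congr rfl fun l _ => by rw [Finset.sum_ite_mem, Finset.univ_inter]
    _ = ∑ k, ∑ l, if k ∈ A l then f l k else 0 := Finset.sum_comm
    _ = ∑ k, ∑ l ∈ Pset A k, f l k :=
        Finset.sum_congr rfl fun k _ => (Finset.sum_filter _ _).symm

lemma sum4_comm (A : Fin L → Finset (Fin K)) (F : Fin L → Fin K → Fin L → Fin K → ℝ) :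
    ∑ l, ∑ k ∈ A l, ∑ i, ∑ t ∈ A i, F l k i t
      = ∑ l, ∑ k ∈ A l, ∑ i, ∑ t ∈ A i, F i t l k := by
  have step : ∀ G : Fin L → Fin K → Fin L → Fin K → ℝ,
      ∑ l, ∑ k ∈ A l, ∑ i, ∑ t ∈ A i, G l k i t
        = ∑ l, ∑ i, ∑ k ∈ A l, ∑ t ∈ A i, G l k i t :=
    fun G => Finset.sum_congr rfl fun l _ => Finset.sum_comm
  rw [step F, step (fun l k i t => F i t l k), Finset.sum_comm]
  exact Finset.sum_congr rfl fun l _ => Finset.sum_congr rfl fun i _ => Finset.sum_comm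

lemma quad_min {a b c x : ℝ} (ha : 0 < a) (hc : 0 < c) (hx : x ≤ c) :
    a * (min (b / a) c) ^ 2 - 2 * b * (min (b / a) c) ≤ a * x ^ 2 - 2 * b * x := by
  rcases le_total (b / a) c with h | h
  · rw [min_eq_left h]
    have hba : a * (b / a) = b := by field_simp
    nlinarith [sq_nonneg (x - b / a), sq_nonneg (b / a)]
  · rw [min_eq_right h]
    have hcb : a * c ≤ b := by
      rw [mul_comm]; exact (le_div_iff₀ ha).mp h
    nlinarith [mul_nonneg (sub_nonneg.2 hx) (sub_nonneg.2 hcb),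
      mul_le_mul_of_nonneg_left hx (le_of_lt ha)]

end Aux
section Aux2

variable {L K : ℕ} (M : ℕ) (σ2 : ℝ) (A : Fin L → Finset (Fin K))
  (β : Fin L → Fin K → Fin L → ℝ)

lemma eMSE_eq (u0 : ℝ) (rhat rho : Fin L → Fin K → ℝ) (l : Fin L) (k : Fin K) :
    eMSE M σ2 A β u0 rhat rho l k
      = Acoef M σ2 A β rhat rho l k * u0 ^ 2
        - 2 * (Real.sqrt ((M : ℝ) * (K : ℝ)) * rho l k * rhat l k * β l k l) * u0 + 1 := by
  unfold eMSE Acoef; ring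

lemma Acoef_eq (rhat rho : Fin L → Fin K → ℝ) {l : Fin L} {k : Fin K} (hl : k ∈ A l) :
    Acoef M σ2 A β rhat rho l k
      = Dterm M σ2 A β (fun i t => rhat i t ^ 2) (fun i t => rho i t ^ 2) l k
        + (M : ℝ) * (K : ℝ) * (rho l k ^ 2 * rhat l k ^ 2 * β l k l ^ 2) := by
  unfold Acoef Dterm
  have hm : l ∈ Pset A k := mem_Pset.mpr hl
  rw [← Finset.sum_erase_add _ _ hm]
  ring

lemma Dterm_sq_pos (hσ : 0 < σ2) (hβ : ∀ i t l, 0 ≤ β i t l)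
    (rhat rho : Fin L → Fin K → ℝ) (l : Fin L) (k : Fin K) :
    0 < Dterm M σ2 A β (fun i t => rhat i t ^ 2) (fun i t => rho i t ^ 2) l k := by
  unfold Dterm
  have h1 : (0:ℝ) ≤ (M : ℝ) * (K : ℝ) * ∑ i ∈ (Pset A k).erase l,
      rho i k ^ 2 * rhat i k ^ 2 * β i k l ^ 2 := by
    apply mul_nonneg (by positivity)
    exact Finset.sum_nonneg fun i _ => by positivity
  have h2 : (0:ℝ) < (K : ℝ) * ∑ i ∈ Pset A k, rhat i k ^ 2 * β i k l + σ2 := by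
    have : (0:ℝ) ≤ (K : ℝ) * ∑ i ∈ Pset A k, rhat i k ^ 2 * β i k l := by
      apply mul_nonneg (by positivity)
      exact Finset.sum_nonneg fun i _ => mul_nonneg (by positivity) (hβ i k l)
    linarith
  have h3 : (0:ℝ) < (∑ i, ∑ t ∈ A i, rho i t ^ 2 * β i t l) + σ2 := by
    have : (0:ℝ) ≤ ∑ i, ∑ t ∈ A i, rho i t ^ 2 * β i t l :=
      Finset.sum_nonneg fun i _ => Finset.sum_nonneg fun t _ =>
        mul_nonneg (by positivity) (hβ i t l)
    linarith
  nlinarith [mul_pos h2 h3]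

lemma sqMK_sq : Real.sqrt ((M : ℝ) * (K : ℝ)) ^ 2 = (M : ℝ) * (K : ℝ) :=
  Real.sq_sqrt (by positivity)

lemma Acoef_sq_pos (hσ : 0 < σ2) (hβ : ∀ i t l, 0 ≤ β i t l)
    (rhat rho : Fin L → Fin K → ℝ) {l : Fin L} {k : Fin K} (hl : k ∈ A l) :
    0 < Acoef M σ2 A β rhat rho l k := by
  rw [Acoef_eq M σ2 A β rhat rho hl]
  have := Dterm_sq_pos M σ2 A β hσ hβ rhat rho l k
  nlinarith [sq_nonneg (rho l k * rhat l k * β l k l), (by positivity : (0:ℝ) ≤ (M:ℝ)*(K:ℝ)),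
    mul_nonneg (by positivity : (0:ℝ) ≤ (M:ℝ)*(K:ℝ)) (sq_nonneg (rho l k * rhat l k * β l k l))]

lemma one_add_SINR (hσ : 0 < σ2) (hβ : ∀ i t l, 0 ≤ β i t l)
    (rhat rho : Fin L → Fin K → ℝ) {l : Fin L} {k : Fin K} (hl : k ∈ A l) :
    1 + SINRsq M σ2 A β rhat rho l k
      = Acoef M σ2 A β rhat rho l k
        / Dterm M σ2 A β (fun i t => rhat i t ^ 2) (fun i t => rho i t ^ 2) l k := by
  have hD := Dterm_sq_pos M σ2 A β hσ hβ rhat rho l k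
  unfold SINRsq SINR
  rw [Acoef_eq M σ2 A β rhat rho hl]
  field_simp

end Aux2
section Aux3

variable {L K : ℕ} (M : ℕ) (σ2 : ℝ) (A : Fin L → Finset (Fin K))
  (β : Fin L → Fin K → Fin L → ℝ)

lemma bv_sq (rhat rho : Fin L → Fin K → ℝ) (l : Fin L) (k : Fin K) :
    (Real.sqrt ((M : ℝ) * (K : ℝ)) * rho l k * rhat l k * β l k l) ^ 2
      = (M : ℝ) * (K : ℝ) * (rho l k ^ 2 * rhat l k ^ 2 * β l k l ^ 2) := by
  have h := sqMK_sq (K := K) M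
  linear_combination (rho l k ^ 2 * rhat l k ^ 2 * β l k l ^ 2) * h

/-- Per-term lower bound: for any `u0` and `w0 > 0`,
`w0 * e(u0) - log w0 ≥ 1 - log(1 + SINR)`. -/
lemma per_term_lower (hσ : 0 < σ2) (hβ : ∀ i t l, 0 ≤ β i t l)
    (rhat rho : Fin L → Fin K → ℝ) {l : Fin L} {k : Fin K} (hl : k ∈ A l)
    (u0 w0 : ℝ) (hw0 : 0 < w0) :
    1 - Real.log (1 + SINRsq M σ2 A β rhat rho l k)
      ≤ w0 * eMSE M σ2 A β u0 rhat rho l k - Real.log w0 := by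
  set D := Dterm M σ2 A β (fun i t => rhat i t ^ 2) (fun i t => rho i t ^ 2) l k with hDdef
  set Av := Acoef M σ2 A β rhat rho l k with hAdef
  set bv := Real.sqrt ((M : ℝ) * (K : ℝ)) * rho l k * rhat l k * β l k l with hbdef
  have hD : 0 < D := Dterm_sq_pos M σ2 A β hσ hβ rhat rho l k
  have hAv : 0 < Av := Acoef_sq_pos M σ2 A β hσ hβ rhat rho hl
  have hA : Av = D + bv ^ 2 := by
    rw [hAdef, Acoef_eq M σ2 A β rhat rho hl, hbdef, bv_sq]
  have he : eMSE M σ2 A β u0 rhat rho l k = Av * u0 ^ 2 - 2 * bv * u0 + 1 :=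
    eMSE_eq M σ2 A β u0 rhat rho l k
  set e := eMSE M σ2 A β u0 rhat rho l k with hedef
  have hemin : D / Av ≤ e := by
    rw [div_le_iff₀ hAv]
    nlinarith [sq_nonneg (Av * u0 - bv)]
  have hepos : 0 < e := lt_of_lt_of_le (div_pos hD hAv) hemin
  have hlog1 : Real.log w0 + Real.log e ≤ w0 * e - 1 := by
    have := Real.log_le_sub_one_of_pos (mul_pos hw0 hepos)
    rwa [Real.log_mul (ne_of_gt hw0) (ne_of_gt hepos)] at this
  have hlog2 : Real.log (D / Av) ≤ Real.log e := Real.log_le_log (div_pos hD hAv) hemin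
  have hS : 1 + SINRsq M σ2 A β rhat rho l k = Av / D :=
    one_add_SINR M σ2 A β hσ hβ rhat rho hl
  rw [hS, Real.log_div (ne_of_gt hAv) (ne_of_gt hD)]
  rw [Real.log_div (ne_of_gt hD) (ne_of_gt hAv)] at hlog2
  linarith

/-- Per-term equality at the old point with `u = uopt`, `w = 1 + SINR`. -/
lemma per_term_eq (hσ : 0 < σ2) (hβ : ∀ i t l, 0 ≤ β i t l)
    (rhat rho : Fin L → Fin K → ℝ) {l : Fin L} {k : Fin K} (hl : k ∈ A l) :
    (1 + SINRsq M σ2 A β rhat rho l k) *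
        eMSE M σ2 A β (uopt M σ2 A β rhat rho l k) rhat rho l k
      - Real.log (1 + SINRsq M σ2 A β rhat rho l k)
      = 1 - Real.log (1 + SINRsq M σ2 A β rhat rho l k) := by
  set D := Dterm M σ2 A β (fun i t => rhat i t ^ 2) (fun i t => rho i t ^ 2) l k with hDdef
  set Av := Acoef M σ2 A β rhat rho l k with hAdef
  set bv := Real.sqrt ((M : ℝ) * (K : ℝ)) * rho l k * rhat l k * β l k l with hbdef
  have hD : 0 < D := Dterm_sq_pos M σ2 A β hσ hβ rhat rho l k
  have hAv : 0 < Av := Acoef_sq_pos M σ2 A β hσ hβ rhat rho hl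
  have hA : Av = D + bv ^ 2 := by
    rw [hAdef, Acoef_eq M σ2 A β rhat rho hl, hbdef, bv_sq]
  have hu : uopt M σ2 A β rhat rho l k = bv / Av := rfl
  have he : eMSE M σ2 A β (uopt M σ2 A β rhat rho l k) rhat rho l k = D / Av := by
    rw [eMSE_eq M σ2 A β _ rhat rho l k, hu, ← hbdef, ← hAdef]
    clear_value Av bv D
    field_simp
    linear_combination hA
  have hS : 1 + SINRsq M σ2 A β rhat rho l k = Av / D :=
    one_add_SINR M σ2 A β hσ hβ rhat rho hl
  rw [he, hS]
  rw [div_mul_div_comm, mul_comm]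
  rw [div_self (by positivity)]

end Aux3
section Aux4

variable {L K : ℕ} (M : ℕ) (σ2 : ℝ) (A : Fin L → Finset (Fin K))
  (β : Fin L → Fin K → Fin L → ℝ)

/-- The WMMSE objective, as a function of the pilot square-root powers `q`,
is a separable quadratic with leading coefficients `etaHat`. -/
lemma pilot_identity (u w rho q : Fin L → Fin K → ℝ) :
    ∑ l, ∑ k ∈ A l, w l k * eMSE M σ2 A β (u l k) q rho l k
      = ∑ l, ∑ k ∈ A l,
          (etaHat M σ2 A β u w rho l k * q l k ^ 2
            - 2 * (Real.sqrt ((M : ℝ) * (K : ℝ)) * rho l k * u l k * w l k * β l k l) * q l k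
            + w l k * (u l k ^ 2 * σ2 * ((∑ i, ∑ t ∈ A i, rho i t ^ 2 * β i t l) + σ2) + 1)) := by
  conv_lhs => rw [sum_swap_A]
  conv_rhs => rw [sum_swap_A]
  refine Finset.sum_congr rfl fun k _ => ?_
  -- the mixed double-sum summand
  set H : Fin L → Fin L → ℝ := fun l i =>
    (w l k * ((M : ℝ) * (K : ℝ)) * u l k ^ 2) * (rho i k ^ 2 * q i k ^ 2 * β i k l ^ 2)
      + (w l k * u l k ^ 2 * (K : ℝ) * ((∑ i', ∑ t ∈ A i', rho i' t ^ 2 * β i' t l) + σ2))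
          * (q i k ^ 2 * β i k l) with hH
  set R : Fin L → ℝ := fun l =>
    w l k * (- (2 * Real.sqrt ((M : ℝ) * (K : ℝ)) * rho l k * q l k * u l k * β l k l)
      + u l k ^ 2 * σ2 * ((∑ i, ∑ t ∈ A i, rho i t ^ 2 * β i t l) + σ2) + 1) with hR
  have expandL : ∑ l ∈ Pset A k, w l k * eMSE M σ2 A β (u l k) q rho l k
      = ∑ l ∈ Pset A k, ((∑ i ∈ Pset A k, H l i) + R l) := by
    refine Finset.sum_congr rfl fun l _ => ?_
    rw [hH]
    simp only [Finset.sum_add_distrib]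
    rw [← Finset.mul_sum, ← Finset.mul_sum, hR]
    unfold eMSE
    ring
  have expandR : ∑ l ∈ Pset A k,
        (etaHat M σ2 A β u w rho l k * q l k ^ 2
          - 2 * (Real.sqrt ((M : ℝ) * (K : ℝ)) * rho l k * u l k * w l k * β l k l) * q l k
          + w l k * (u l k ^ 2 * σ2 * ((∑ i, ∑ t ∈ A i, rho i t ^ 2 * β i t l) + σ2) + 1))
      = ∑ l ∈ Pset A k, ((∑ i ∈ Pset A k, H i l) + R l) := by
    refine Finset.sum_congr rfl fun l _ => ?_
    have h1 : ∑ i ∈ Pset A k, H i l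
        = (rho l k ^ 2 * q l k ^ 2 * ((M : ℝ) * (K : ℝ)))
            * (∑ i ∈ Pset A k, w i k * u i k ^ 2 * β l k i ^ 2)
          + (q l k ^ 2 * (K : ℝ))
            * (∑ j ∈ Pset A k, w j k * u j k ^ 2 * β l k j *
                ((∑ i, ∑ t ∈ A i, rho i t ^ 2 * β i t j) + σ2)) := by
      rw [hH]
      simp only [Finset.sum_add_distrib]
      rw [Finset.mul_sum, Finset.mul_sum]
      congr 1
      · exact Finset.sum_congr rfl fun i _ => by ring
      · exact Finset.sum_congr rfl fun i _ => by ring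
    rw [h1, hR]
    unfold etaHat
    ring
  have hcomm : (∑ l ∈ Pset A k, ∑ i ∈ Pset A k, H l i)
      = ∑ l ∈ Pset A k, ∑ i ∈ Pset A k, H i l := Finset.sum_comm
  rw [expandL, expandR, Finset.sum_add_distrib, Finset.sum_add_distrib, hcomm]

end Aux4
section Aux5

variable {L K : ℕ} (M : ℕ) (σ2 : ℝ) (A : Fin L → Finset (Fin K))
  (β : Fin L → Fin K → Fin L → ℝ)

lemma sumP_comm (G : Fin L → Fin K → Fin L → ℝ) :
    ∑ l, ∑ k ∈ A l, ∑ i ∈ Pset A k, G l k i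
      = ∑ l, ∑ k ∈ A l, ∑ i ∈ Pset A k, G i k l := by
  conv_lhs => rw [sum_swap_A]
  conv_rhs => rw [sum_swap_A]
  exact Finset.sum_congr rfl fun k _ => Finset.sum_comm

/-- The WMMSE objective, as a function of the data square-root powers `p`,
is a separable quadratic with leading coefficients `etaData`. -/
lemma data_identity (u w rhat p : Fin L → Fin K → ℝ) :
    ∑ l, ∑ k ∈ A l, w l k * eMSE M σ2 A β (u l k) rhat p l k
      = ∑ l, ∑ k ∈ A l,
          (etaData M σ2 A β u w rhat l k * p l k ^ 2
            - 2 * (Real.sqrt ((M : ℝ) * (K : ℝ)) * rhat l k * u l k * w l k * β l k l) * p l k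
            + w l k * (u l k ^ 2 *
                ((K : ℝ) * ∑ i ∈ Pset A k, rhat i k ^ 2 * β i k l + σ2) * σ2 + 1)) := by
  set G : Fin L → Fin K → Fin L → ℝ := fun l k i =>
    (w l k * ((M : ℝ) * (K : ℝ)) * u l k ^ 2) * (p i k ^ 2 * rhat i k ^ 2 * β i k l ^ 2)
    with hG
  set F : Fin L → Fin K → Fin L → Fin K → ℝ := fun l k i t =>
    (w l k * u l k ^ 2 * ((K : ℝ) * ∑ j ∈ Pset A k, rhat j k ^ 2 * β j k l + σ2))
      * (p i t ^ 2 * β i t l) with hF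
  set R : Fin L → Fin K → ℝ := fun l k =>
    - (2 * (Real.sqrt ((M : ℝ) * (K : ℝ)) * rhat l k * u l k * w l k * β l k l)) * p l k
      + w l k * (u l k ^ 2 *
          ((K : ℝ) * ∑ i ∈ Pset A k, rhat i k ^ 2 * β i k l + σ2) * σ2 + 1) with hR
  have expandL : ∑ l, ∑ k ∈ A l, w l k * eMSE M σ2 A β (u l k) rhat p l k
      = ∑ l, ∑ k ∈ A l, ((∑ i ∈ Pset A k, G l k i)
          + (∑ i, ∑ t ∈ A i, F l k i t) + R l k) := by
    refine Finset.sum_congr rfl fun l _ => Finset.sum_congr rfl fun k _ => ?_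
    have hg : ∑ i ∈ Pset A k, G l k i
        = (w l k * ((M : ℝ) * (K : ℝ)) * u l k ^ 2)
            * ∑ i ∈ Pset A k, p i k ^ 2 * rhat i k ^ 2 * β i k l ^ 2 :=
      (Finset.mul_sum _ _ _).symm
    have hf : ∑ i, ∑ t ∈ A i, F l k i t
        = (w l k * u l k ^ 2 * ((K : ℝ) * ∑ j ∈ Pset A k, rhat j k ^ 2 * β j k l + σ2))
            * ∑ i, ∑ t ∈ A i, p i t ^ 2 * β i t l := by
      rw [Finset.mul_sum]
      exact Finset.sum_congr rfl fun i _ => (Finset.mul_sum _ _ _).symm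
    rw [hg, hf, hR]
    unfold eMSE
    ring
  have expandR : ∑ l, ∑ k ∈ A l,
        (etaData M σ2 A β u w rhat l k * p l k ^ 2
          - 2 * (Real.sqrt ((M : ℝ) * (K : ℝ)) * rhat l k * u l k * w l k * β l k l) * p l k
          + w l k * (u l k ^ 2 *
              ((K : ℝ) * ∑ i ∈ Pset A k, rhat i k ^ 2 * β i k l + σ2) * σ2 + 1))
      = ∑ l, ∑ k ∈ A l, ((∑ i ∈ Pset A k, G i k l)
          + (∑ i, ∑ t ∈ A i, F i t l k) + R l k) := by
    refine Finset.sum_congr rfl fun l _ => Finset.sum_congr rfl fun k _ => ?_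
    have hg : ∑ i ∈ Pset A k, G i k l
        = (p l k ^ 2 * rhat l k ^ 2 * ((M : ℝ) * (K : ℝ)))
            * ∑ i ∈ Pset A k, w i k * u i k ^ 2 * β l k i ^ 2 := by
      rw [Finset.mul_sum]
      exact Finset.sum_congr rfl fun i _ => by rw [hG]; ring
    have hf : ∑ i, ∑ t ∈ A i, F i t l k
        = p l k ^ 2 * ∑ i, ∑ t ∈ A i, w i t * u i t ^ 2 * β l k i *
            ((K : ℝ) * ∑ j ∈ Pset A t, rhat j t ^ 2 * β j t i + σ2) := by
      rw [Finset.mul_sum]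
      refine Finset.sum_congr rfl fun i _ => ?_
      rw [Finset.mul_sum]
      exact Finset.sum_congr rfl fun t _ => by rw [hF]; ring
    rw [hg, hf, hR]
    unfold etaData
    ring
  rw [expandL, expandR]
  simp only [Finset.sum_add_distrib]
  rw [sumP_comm A G, sum4_comm A F]

end Aux5
section Aux6

variable {L K : ℕ} (M : ℕ) (σ2 : ℝ) (A : Fin L → Finset (Fin K))
  (β : Fin L → Fin K → Fin L → ℝ)

lemma etaHat_pos (hK : 0 < K) (hσ : 0 < σ2) (hβ : ∀ i t l, 0 ≤ β i t l)
    (u w rho : Fin L → Fin K → ℝ) (hw : ∀ i, ∀ t ∈ A i, 0 < w i t)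
    {l : Fin L} {k : Fin K} (hl : k ∈ A l) (hu : u l k ≠ 0) (hβl : 0 < β l k l) :
    0 < etaHat M σ2 A β u w rho l k := by
  unfold etaHat
  have hT : ∀ j : Fin L, (0:ℝ) < (∑ i, ∑ t ∈ A i, rho i t ^ 2 * β i t j) + σ2 := by
    intro j
    have : (0:ℝ) ≤ ∑ i, ∑ t ∈ A i, rho i t ^ 2 * β i t j :=
      Finset.sum_nonneg fun i _ => Finset.sum_nonneg fun t _ =>
        mul_nonneg (sq_nonneg _) (hβ i t j)
    linarith
  have h1 : (0:ℝ) ≤ rho l k ^ 2 * (M : ℝ) * (K : ℝ)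
      * ∑ i ∈ Pset A k, w i k * u i k ^ 2 * β l k i ^ 2 := by
    apply mul_nonneg (by positivity)
    exact Finset.sum_nonneg fun i hi =>
      mul_nonneg (mul_nonneg (le_of_lt (hw i k (mem_Pset.mp hi))) (sq_nonneg _)) (sq_nonneg _)
  have h2 : (0:ℝ) < ∑ j ∈ Pset A k, w j k * u j k ^ 2 * β l k j *
      ((∑ i, ∑ t ∈ A i, rho i t ^ 2 * β i t j) + σ2) := by
    refine Finset.sum_pos' (fun j hj => ?_) ⟨l, mem_Pset.mpr hl, ?_⟩
    · exact mul_nonneg (mul_nonneg (mul_nonneg (le_of_lt (hw j k (mem_Pset.mp hj)))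
        (sq_nonneg _)) (hβ l k j)) (le_of_lt (hT j))
    · have := hw l k hl
      have hu2 : 0 < u l k ^ 2 := by positivity
      have := hT l
      positivity
  have hKpos : (0:ℝ) < (K : ℝ) := by exact_mod_cast hK
  nlinarith [mul_pos hKpos h2]

lemma etaData_pos (hK : 0 < K) (hσ : 0 < σ2) (hβ : ∀ i t l, 0 ≤ β i t l)
    (u w rhat : Fin L → Fin K → ℝ) (hw : ∀ i, ∀ t ∈ A i, 0 < w i t)
    {l : Fin L} {k : Fin K} (hl : k ∈ A l) (hu : u l k ≠ 0) (hβl : 0 < β l k l) :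
    0 < etaData M σ2 A β u w rhat l k := by
  unfold etaData
  have hB : ∀ (i : Fin L) (t : Fin K),
      (0:ℝ) < (K : ℝ) * ∑ j ∈ Pset A t, rhat j t ^ 2 * β j t i + σ2 := by
    intro i t
    have : (0:ℝ) ≤ (K : ℝ) * ∑ j ∈ Pset A t, rhat j t ^ 2 * β j t i :=
      mul_nonneg (by positivity)
        (Finset.sum_nonneg fun j _ => mul_nonneg (sq_nonneg _) (hβ j t i))
    linarith
  have h1 : (0:ℝ) ≤ rhat l k ^ 2 * (M : ℝ) * (K : ℝ)
      * ∑ i ∈ Pset A k, w i k * u i k ^ 2 * β l k i ^ 2 := by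
    apply mul_nonneg (by positivity)
    exact Finset.sum_nonneg fun i hi =>
      mul_nonneg (mul_nonneg (le_of_lt (hw i k (mem_Pset.mp hi))) (sq_nonneg _)) (sq_nonneg _)
  have h2 : (0:ℝ) < ∑ i, ∑ t ∈ A i, w i t * u i t ^ 2 * β l k i *
      ((K : ℝ) * ∑ j ∈ Pset A t, rhat j t ^ 2 * β j t i + σ2) := by
    have hnn : ∀ (i : Fin L), ∀ t ∈ A i, (0:ℝ) ≤ w i t * u i t ^ 2 * β l k i *
        ((K : ℝ) * ∑ j ∈ Pset A t, rhat j t ^ 2 * β j t i + σ2) := fun i t ht =>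
      mul_nonneg (mul_nonneg (mul_nonneg (le_of_lt (hw i t ht)) (sq_nonneg _)) (hβ l k i))
        (le_of_lt (hB i t))
    refine Finset.sum_pos' (fun i _ => Finset.sum_nonneg fun t ht => hnn i t ht)
      ⟨l, Finset.mem_univ l, ?_⟩
    refine Finset.sum_pos' (fun t ht => hnn l t ht) ⟨k, hl, ?_⟩
    have := hw l k hl
    have hu2 : 0 < u l k ^ 2 := by positivity
    have := hB l k
    positivity
  linarith

end Aux6
section Main

lemma stmt15_main {L K : ℕ} (M : ℕ) (hK : 0 < K) (hM : 0 < M)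
    (σ2 : ℝ) (hσ : 0 < σ2)
    (A : Fin L → Finset (Fin K))
    (β : Fin L → Fin K → Fin L → ℝ) (hβ : ∀ i t l, 0 ≤ β i t l)
    (Pm : Fin L → Fin K → ℝ) (hPm : ∀ l, ∀ k ∈ A l, 0 < Pm l k)
    (hβpos : ∀ l, ∀ k ∈ A l, 0 < β l k l)
    (rhat rho : Fin L → Fin K → ℝ)
    (hrhat : ∀ l, ∀ k ∈ A l, 0 < rhat l k ∧ rhat l k ≤ Real.sqrt (Pm l k))
    (hrho : ∀ l, ∀ k ∈ A l, 0 < rho l k ∧ rho l k ≤ Real.sqrt (Pm l k))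
    (u w rhatPlus rhoPlus : Fin L → Fin K → ℝ)
    (hu : u = fun l k => uopt M σ2 A β rhat rho l k)
    (hw : w = fun l k => 1 + SINRsq M σ2 A β rhat rho l k)
    (hrp : rhatPlus = fun l k =>
      min (Real.sqrt ((M : ℝ) * (K : ℝ)) * rho l k * u l k * w l k * β l k l /
            etaHat M σ2 A β u w rho l k)
          (Real.sqrt (Pm l k)))
    (hpp : rhoPlus = fun l k =>
      min (Real.sqrt ((M : ℝ) * (K : ℝ)) * rhatPlus l k * u l k * w l k * β l k l /
            etaData M σ2 A β u w rhatPlus l k)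
          (Real.sqrt (Pm l k))) :
    (∀ l, ∀ k ∈ A l, 0 < u l k ∧ 0 < w l k ∧
      0 < etaHat M σ2 A β u w rho l k ∧ 0 < etaData M σ2 A β u w rhatPlus l k) ∧
    (∑ l, ∑ k ∈ A l, Real.log (1 + SINRsq M σ2 A β rhat rho l k)) ≤
      ∑ l, ∑ k ∈ A l, Real.log (1 + SINRsq M σ2 A β rhatPlus rhoPlus l k) := by
  have hMK : (0:ℝ) < Real.sqrt ((M : ℝ) * (K : ℝ)) :=
    Real.sqrt_pos.mpr (by positivity)
  -- positivity of u and w on active pairs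
  have hupos : ∀ l, ∀ k ∈ A l, 0 < u l k := by
    intro l k hl
    rw [hu]
    have hAv : 0 < Acoef M σ2 A β rhat rho l k := Acoef_sq_pos M σ2 A β hσ hβ rhat rho hl
    have hb : 0 < Real.sqrt ((M : ℝ) * (K : ℝ)) * rho l k * rhat l k * β l k l := by
      have := (hrho l k hl).1; have := (hrhat l k hl).1; have := hβpos l k hl
      positivity
    exact div_pos hb hAv
  have hwpos : ∀ l, ∀ k ∈ A l, 0 < w l k := by
    intro l k hl
    rw [hw]
    have h := one_add_SINR M σ2 A β hσ hβ rhat rho hl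
    simp only [h]
    exact div_pos (Acoef_sq_pos M σ2 A β hσ hβ rhat rho hl)
      (Dterm_sq_pos M σ2 A β hσ hβ rhat rho l k)
  have hEtaHat : ∀ l, ∀ k ∈ A l, 0 < etaHat M σ2 A β u w rho l k := fun l k hl =>
    etaHat_pos M σ2 A β hK hσ hβ u w rho hwpos hl (ne_of_gt (hupos l k hl)) (hβpos l k hl)
  have hsqPm : ∀ l, ∀ k ∈ A l, 0 < Real.sqrt (Pm l k) := fun l k hl =>
    Real.sqrt_pos.mpr (hPm l k hl)
  have hEtaData : ∀ l, ∀ k ∈ A l, 0 < etaData M σ2 A β u w rhatPlus l k := fun l k hl =>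
    etaData_pos M σ2 A β hK hσ hβ u w rhatPlus hwpos hl (ne_of_gt (hupos l k hl))
      (hβpos l k hl)
  refine ⟨fun l k hl => ⟨hupos l k hl, hwpos l k hl, hEtaHat l k hl, hEtaData l k hl⟩, ?_⟩
  -- the three comparison steps
  have h_old_eq : ∑ l, ∑ k ∈ A l,
        (w l k * eMSE M σ2 A β (u l k) rhat rho l k - Real.log (w l k))
      = ∑ l, ∑ k ∈ A l, (1 - Real.log (1 + SINRsq M σ2 A β rhat rho l k)) := by
    refine Finset.sum_congr rfl fun l _ => Finset.sum_congr rfl fun k hl => ?_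
    simp only [hu, hw]
    exact per_term_eq M σ2 A β hσ hβ rhat rho hl
  have h_pilot : ∑ l, ∑ k ∈ A l,
        (w l k * eMSE M σ2 A β (u l k) rhatPlus rho l k - Real.log (w l k))
      ≤ ∑ l, ∑ k ∈ A l,
        (w l k * eMSE M σ2 A β (u l k) rhat rho l k - Real.log (w l k)) := by
    simp only [Finset.sum_sub_distrib]
    apply sub_le_sub_right
    rw [pilot_identity M σ2 A β u w rho rhatPlus, pilot_identity M σ2 A β u w rho rhat]
    refine Finset.sum_le_sum fun l _ => Finset.sum_le_sum fun k hl => ?_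
    have hq := quad_min (b := Real.sqrt ((M : ℝ) * (K : ℝ)) * rho l k * u l k * w l k * β l k l)
      (hEtaHat l k hl) (hsqPm l k hl) (hrhat l k hl).2
    have hrpk : rhatPlus l k
        = min (Real.sqrt ((M : ℝ) * (K : ℝ)) * rho l k * u l k * w l k * β l k l /
            etaHat M σ2 A β u w rho l k) (Real.sqrt (Pm l k)) := by rw [hrp]
    rw [hrpk]
    linarith
  have h_data : ∑ l, ∑ k ∈ A l,
        (w l k * eMSE M σ2 A β (u l k) rhatPlus rhoPlus l k - Real.log (w l k))
      ≤ ∑ l, ∑ k ∈ A l,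
        (w l k * eMSE M σ2 A β (u l k) rhatPlus rho l k - Real.log (w l k)) := by
    simp only [Finset.sum_sub_distrib]
    apply sub_le_sub_right
    rw [data_identity M σ2 A β u w rhatPlus rhoPlus, data_identity M σ2 A β u w rhatPlus rho]
    refine Finset.sum_le_sum fun l _ => Finset.sum_le_sum fun k hl => ?_
    have hq := quad_min
      (b := Real.sqrt ((M : ℝ) * (K : ℝ)) * rhatPlus l k * u l k * w l k * β l k l)
      (hEtaData l k hl) (hsqPm l k hl) (hrho l k hl).2
    have hppk : rhoPlus l k
        = min (Real.sqrt ((M : ℝ) * (K : ℝ)) * rhatPlus l k * u l k * w l k * β l k l /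
            etaData M σ2 A β u w rhatPlus l k) (Real.sqrt (Pm l k)) := by rw [hpp]
    rw [hppk]
    linarith
  have h_new_ge : ∑ l, ∑ k ∈ A l, (1 - Real.log (1 + SINRsq M σ2 A β rhatPlus rhoPlus l k))
      ≤ ∑ l, ∑ k ∈ A l,
        (w l k * eMSE M σ2 A β (u l k) rhatPlus rhoPlus l k - Real.log (w l k)) := by
    refine Finset.sum_le_sum fun l _ => Finset.sum_le_sum fun k hl => ?_
    exact per_term_lower M σ2 A β hσ hβ rhatPlus rhoPlus hl (u l k) (w l k) (hwpos l k hl)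
  have hsplit : ∀ S : Fin L → Fin K → ℝ,
      ∑ l, ∑ k ∈ A l, (1 - S l k)
        = (∑ l, ∑ k ∈ A l, (1:ℝ)) - ∑ l, ∑ k ∈ A l, S l k := by
    intro S; simp only [Finset.sum_sub_distrib]
  have e1 := hsplit (fun l k => Real.log (1 + SINRsq M σ2 A β rhat rho l k))
  have e2 := hsplit (fun l k => Real.log (1 + SINRsq M σ2 A β rhatPlus rhoPlus l k))
  rw [e1] at h_old_eq
  rw [e2] at h_new_ge
  linarith

end Main

/-- monotonicity of one iteration of Algorithm 1: starting from
strictly positive feasible square-root powers, one full round of the updates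
`u = u^opt(ρ̂,ρ)`, `w = 1 + SINR(ρ̂,ρ)`,
`ρ̂⁺_{l,k} = min(√(MK) ρ_{l,k} u_{l,k} w_{l,k} β_{l,k}^l / η̂_{l,k}(u,w,ρ), √P_{l,k})`,
`ρ⁺_{l,k} = min(√(MK) ρ̂⁺_{l,k} u_{l,k} w_{l,k} β_{l,k}^l / η_{l,k}(u,w,ρ̂⁺), √P_{l,k})`
is well defined (`u, w, η̂, η > 0` on active pairs) and does not decrease the sum
spectral efficiency `Σ_l Σ_{k∈A_l} ln(1 + SINR_{l,k})`. -/
theorem stmt15 {L K : ℕ} (M : ℕ) (hL : 0 < L) (hK : 0 < K) (hM : 0 < M)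
    (σ2 : ℝ) (hσ : 0 < σ2)
    (A : Fin L → Finset (Fin K))
    (β : Fin L → Fin K → Fin L → ℝ) (hβ : ∀ i t l, 0 ≤ β i t l)
    (Pm : Fin L → Fin K → ℝ) (hPm : ∀ l, ∀ k ∈ A l, 0 < Pm l k)
    (hβpos : ∀ l, ∀ k ∈ A l, 0 < β l k l)
    (rhat rho : Fin L → Fin K → ℝ)
    (hrhat : ∀ l, ∀ k ∈ A l, 0 < rhat l k ∧ rhat l k ≤ Real.sqrt (Pm l k))
    (hrho : ∀ l, ∀ k ∈ A l, 0 < rho l k ∧ rho l k ≤ Real.sqrt (Pm l k)) :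
    let u : Fin L → Fin K → ℝ := fun l k => uopt M σ2 A β rhat rho l k
    let w : Fin L → Fin K → ℝ := fun l k => 1 + SINRsq M σ2 A β rhat rho l k
    let rhatPlus : Fin L → Fin K → ℝ := fun l k =>
      min (Real.sqrt ((M : ℝ) * (K : ℝ)) * rho l k * u l k * w l k * β l k l /
            etaHat M σ2 A β u w rho l k)
          (Real.sqrt (Pm l k))
    let rhoPlus : Fin L → Fin K → ℝ := fun l k =>
      min (Real.sqrt ((M : ℝ) * (K : ℝ)) * rhatPlus l k * u l k * w l k * β l k l /
            etaData M σ2 A β u w rhatPlus l k)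
          (Real.sqrt (Pm l k))
    (∀ l, ∀ k ∈ A l, 0 < u l k ∧ 0 < w l k ∧
      0 < etaHat M σ2 A β u w rho l k ∧ 0 < etaData M σ2 A β u w rhatPlus l k) ∧
    (∑ l, ∑ k ∈ A l, Real.log (1 + SINRsq M σ2 A β rhat rho l k)) ≤
      ∑ l, ∑ k ∈ A l, Real.log (1 + SINRsq M σ2 A β rhatPlus rhoPlus l k) := by
  intro u w rhatPlus rhoPlus
  exact stmt15_main M hK hM σ2 hσ A β hβ Pm hPm hβpos rhat rho hrhat hrho
    u w rhatPlus rhoPlus rfl rfl rfl rfl
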